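/- arXiv:1107.2094 — 5 statements merged into one kernel-verified Lean document; each statement's English description precedes it below -/
import Mathlib

section
/- Let H and K be Hilbert spaces with H ≠ {0}, and let F₁, F₂ be closed subspaces of K. Then the intersection of the closed subspaces H ⊗ F₁ and H ⊗ F₂ of H ⊗ K equals H ⊗ (F₁ ∩ F₂). In particular, if (H ⊗ F₁) ∩ (H ⊗ F₂) = {0} then F₁ ∩ F₂ = {0}. -/
local notation "⟪" x ", " y "⟫" => @inner ℂ _ _ x y

section aux
variable {H K E : Type*}
  [NormedAddCommGroup H] [InnerProductSpace ℂ H]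
  [NormedAddCommGroup K] [InnerProductSpace ℂ K]
  [NormedAddCommGroup E] [InnerProductSpace ℂ E]

/-- The (algebraic) span of simple tensors with second leg in `F`. -/
def tspan (t : H →L[ℂ] K →L[ℂ] E) (F : Submodule ℂ K) : Submodule ℂ E :=
  Submodule.span ℂ {z : E | ∃ ξ, ∃ η ∈ F, z = t ξ η}

lemma inner_span_eq_zero (q : E) (S : Set E) (h : ∀ u ∈ S, ⟪q, u⟫ = 0) :
    ∀ u ∈ Submodule.span ℂ S, ⟪q, u⟫ = 0 := by
  intro u hu
  have : Submodule.span ℂ S ≤ (innerSL ℂ q).ker :=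
    Submodule.span_le.2 (fun u hu => h u hu)
  exact this hu

lemma mem_tspan_orth (t : H →L[ℂ] K →L[ℂ] E) (F : Submodule ℂ K) (z : E) :
    z ∈ (tspan t F)ᗮ ↔ ∀ ξ, ∀ η ∈ F, ⟪z, t ξ η⟫ = 0 := by
  rw [Submodule.mem_orthogonal']
  constructor
  · intro h ξ η hη
    exact h _ (Submodule.subset_span ⟨ξ, η, hη, rfl⟩)
  · intro h u hu
    refine inner_span_eq_zero z _ ?_ u hu
    rintro u ⟨ξ, η, hη, rfl⟩
    exact h ξ η hη

end aux

section aux2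
variable {H K E : Type*}
  [NormedAddCommGroup H] [InnerProductSpace ℂ H] [CompleteSpace H]
  [NormedAddCommGroup K] [InnerProductSpace ℂ K] [CompleteSpace K]
  [NormedAddCommGroup E] [InnerProductSpace ℂ E] [CompleteSpace E]
  (t : H →L[ℂ] K →L[ℂ] E)
  (ht : ∀ (ξ ξ' : H) (η η' : K),
      (inner ℂ (t ξ η) (t ξ' η') : ℂ) = (inner ℂ ξ ξ' : ℂ) * (inner ℂ η η' : ℂ))

include ht

lemma tspan_le_orth (F : Submodule ℂ K) :
    tspan t F ≤ (tspan t Fᗮ)ᗮ := by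
  rw [tspan, Submodule.span_le]
  rintro z ⟨ξ, η, hη, rfl⟩
  rw [SetLike.mem_coe, mem_tspan_orth]
  intro ξ' η' hη'
  rw [ht]
  rw [Submodule.mem_orthogonal] at hη'
  rw [hη' η hη, mul_zero]

lemma closure_tspan (hdense : Dense (↑(Submodule.span ℂ {z : E | ∃ ξ η, z = t ξ η}) : Set E))
    (F : Submodule ℂ K) (hF : IsClosed (F : Set K)) :
    (tspan t Fᗮ)ᗮ = (tspan t F).topologicalClosure := by
  haveI : CompleteSpace F := hF.completeSpace_coe
  haveI : CompleteSpace ((tspan t F).topologicalClosure) :=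
    (Submodule.isClosed_topologicalClosure (tspan t F)).completeSpace_coe
  have easy : (tspan t F).topologicalClosure ≤ (tspan t Fᗮ)ᗮ :=
    Submodule.topologicalClosure_minimal _ (tspan_le_orth t ht F)
      (Submodule.isClosed_orthogonal _)
  refine le_antisymm ?_ easy
  intro z hz
  obtain ⟨p, hp, q, hq, rfl⟩ :=
    ((tspan t F).topologicalClosure).exists_add_mem_mem_orthogonal z
  have hq2 : q ∈ (tspan t Fᗮ)ᗮ := by
    have : (p + q) - p ∈ (tspan t Fᗮ)ᗮ := Submodule.sub_mem _ hz (easy hp)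
    simpa using this
  have hq1 : ∀ ξ, ∀ η ∈ F, ⟪q, t ξ η⟫ = 0 := by
    intro ξ η hη
    have := (Submodule.mem_orthogonal' _ q).1 hq (t ξ η)
      ((tspan t F).le_topologicalClosure (Submodule.subset_span ⟨ξ, η, hη, rfl⟩))
    exact this
  have hq3 : ∀ u ∈ Submodule.span ℂ {z : E | ∃ ξ η, z = t ξ η}, ⟪q, u⟫ = 0 := by
    refine inner_span_eq_zero q _ ?_
    rintro u ⟨ξ, η, rfl⟩
    obtain ⟨a, ha, b, hb, rfl⟩ := F.exists_add_mem_mem_orthogonal η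
    rw [map_add, inner_add_right, hq1 ξ a ha,
      (mem_tspan_orth t Fᗮ q).1 hq2 ξ b hb, add_zero]
  have hq0 : q = 0 := by
    have hker : (Submodule.span ℂ {z : E | ∃ ξ η, z = t ξ η} : Set E) ⊆
        ((innerSL ℂ q).ker : Set E) := fun u hu => hq3 u hu
    have hsub : Set.univ ⊆ ((innerSL ℂ q).ker : Set E) :=
      hdense.closure_eq ▸ closure_minimal hker (ContinuousLinearMap.isClosed_ker _)
    have hqq : ⟪q, q⟫ = 0 := by simpa using hsub (Set.mem_univ q)
    exact inner_self_eq_zero.1 hqq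
  rw [hq0, add_zero]
  exact hp

end aux2

/-- With `E` a Hilbert tensor product of `H ≠ 0` and `K` (witnessed by `t`), and closed subspaces
`F₁, F₂ ⊆ K`, the intersection of the closed subspaces `H ⊗ F₁` and `H ⊗ F₂` of `H ⊗ K` equals
`H ⊗ (F₁ ∩ F₂)`; in particular if the intersection is zero then `F₁ ∩ F₂ = 0`. -/
theorem stmt_5 {H K E : Type*}
    [NormedAddCommGroup H] [InnerProductSpace ℂ H] [CompleteSpace H] [Nontrivial H]
    [NormedAddCommGroup K] [InnerProductSpace ℂ K] [CompleteSpace K]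
    [NormedAddCommGroup E] [InnerProductSpace ℂ E] [CompleteSpace E]
    (t : H →L[ℂ] K →L[ℂ] E)
    (ht : ∀ (ξ ξ' : H) (η η' : K),
      (inner ℂ (t ξ η) (t ξ' η') : ℂ) = (inner ℂ ξ ξ' : ℂ) * (inner ℂ η η' : ℂ))
    (hdense : Dense (↑(Submodule.span ℂ {z : E | ∃ ξ η, z = t ξ η}) : Set E))
    (F₁ F₂ : Submodule ℂ K) (hF₁ : IsClosed (F₁ : Set K)) (hF₂ : IsClosed (F₂ : Set K)) :
    ((Submodule.span ℂ {z : E | ∃ ξ, ∃ η ∈ F₁, z = t ξ η}).topologicalClosure ⊓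
        (Submodule.span ℂ {z : E | ∃ ξ, ∃ η ∈ F₂, z = t ξ η}).topologicalClosure =
      (Submodule.span ℂ {z : E | ∃ ξ, ∃ η ∈ F₁ ⊓ F₂, z = t ξ η}).topologicalClosure) ∧
    ((Submodule.span ℂ {z : E | ∃ ξ, ∃ η ∈ F₁, z = t ξ η}).topologicalClosure ⊓
        (Submodule.span ℂ {z : E | ∃ ξ, ∃ η ∈ F₂, z = t ξ η}).topologicalClosure = ⊥ →
      F₁ ⊓ F₂ = ⊥) := by
  haveI : CompleteSpace F₁ := hF₁.completeSpace_coe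
  haveI : CompleteSpace F₂ := hF₂.completeSpace_coe
  have hF12 : IsClosed ((F₁ ⊓ F₂ : Submodule ℂ K) : Set K) := hF₁.inter hF₂
  have h12 : ((F₁ ⊓ F₂ : Submodule ℂ K))ᗮ = (F₁ᗮ ⊔ F₂ᗮ).topologicalClosure := by
    rw [← Submodule.orthogonal_orthogonal_eq_closure, ← Submodule.inf_orthogonal,
      Submodule.orthogonal_orthogonal F₁, Submodule.orthogonal_orthogonal F₂]
  have key : ∀ F : Submodule ℂ K, IsClosed (F : Set K) →
      (tspan t Fᗮ)ᗮ = (Submodule.span ℂ {z : E | ∃ ξ, ∃ η ∈ F, z = t ξ η}).topologicalClosure :=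
    fun F hF => closure_tspan t ht hdense F hF
  have main : (Submodule.span ℂ {z : E | ∃ ξ, ∃ η ∈ F₁, z = t ξ η}).topologicalClosure ⊓
        (Submodule.span ℂ {z : E | ∃ ξ, ∃ η ∈ F₂, z = t ξ η}).topologicalClosure =
      (Submodule.span ℂ {z : E | ∃ ξ, ∃ η ∈ F₁ ⊓ F₂, z = t ξ η}).topologicalClosure := by
    rw [← key F₁ hF₁, ← key F₂ hF₂, ← key (F₁ ⊓ F₂) hF12]
    ext z
    simp only [Submodule.mem_inf, mem_tspan_orth]
    constructor
    · rintro ⟨h1, h2⟩ ξ η hη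
      have hker1 : F₁ᗮ ≤ ((innerSL ℂ z).comp (t ξ)).ker := fun η' hη' => h1 ξ η' hη'
      have hker2 : F₂ᗮ ≤ ((innerSL ℂ z).comp (t ξ)).ker := fun η' hη' => h2 ξ η' hη'
      have hsup : (F₁ᗮ ⊔ F₂ᗮ).topologicalClosure ≤
          ((innerSL ℂ z).comp (t ξ)).ker :=
        Submodule.topologicalClosure_minimal _ (sup_le hker1 hker2)
          (ContinuousLinearMap.isClosed_ker _)
      have := hsup (h12 ▸ hη)
      simpa using this
    · intro h
      refine ⟨fun ξ η hη => h ξ η ?_, fun ξ η hη => h ξ η ?_⟩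
      · exact Submodule.orthogonal_le inf_le_left hη
      · exact Submodule.orthogonal_le inf_le_right hη
  refine ⟨main, fun hbot => ?_⟩
  rw [main] at hbot
  rw [eq_bot_iff]
  rintro η hη
  obtain ⟨ξ, hξ⟩ := exists_ne (0 : H)
  have hmem : t ξ η ∈ (⊥ : Submodule ℂ E) := by
    rw [← hbot]
    exact (Submodule.span ℂ _).le_topologicalClosure (Submodule.subset_span ⟨ξ, η, hη, rfl⟩)
  have h0 : t ξ η = 0 := hmem
  have : (⟪ξ, ξ⟫ : ℂ) * ⟪η, η⟫ = 0 := by rw [← ht ξ ξ η η, h0, inner_zero_left]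
  have hξ0 : (⟪ξ, ξ⟫ : ℂ) ≠ 0 := fun hc => hξ (inner_self_eq_zero.1 hc)
  have hη0 : (⟪η, η⟫ : ℂ) = 0 := by
    rcases mul_eq_zero.1 this with h | h
    · exact absurd h hξ0
    · exact h
  simpa using inner_self_eq_zero.1 hη0
end

section
/- Let H be a Hilbert space and (a_i)_{i∈I} a family of bounded positive operators on H that are pairwise orthogonal, in the sense that a_i a_j = 0 whenever i ≠ j, and suppose the finite partial sums of Σ_i a_i are uniformly bounded so that Σ_i a_i converges in the strong operator topology to a bounded operator S. Then ‖S‖ = sup_{i∈I} ‖a_i‖. -/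
open scoped InnerProductSpace
open ContinuousLinearMap RCLike

set_option synthInstance.maxHeartbeats 1000000
set_option maxHeartbeats 1000000

/-- Cauchy–Schwarz style inequality: for a positive operator `a`,
`‖a ξ‖² ≤ ‖a‖ · re⟪a ξ, ξ⟫`. -/
lemma aux_sq_le {H : Type*} [NormedAddCommGroup H] [InnerProductSpace ℂ H] [CompleteSpace H]
    (a : H →L[ℂ] H) (ha : a.IsPositive) (ξ : H) :
    ‖a ξ‖ ^ 2 ≤ ‖a‖ * re ⟪a ξ, ξ⟫_ℂ := by
  have hsym : ((a : H →ₗ[ℂ] H)).IsSymmetric :=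
    (ContinuousLinearMap.isSelfAdjoint_iff_isSymmetric).mp ha.isSelfAdjoint
  have hsym' : ∀ x y : H, ⟪a x, y⟫_ℂ = ⟪x, a y⟫_ℂ := fun x y => hsym x y
  -- the positive sesquilinear form `(x, y) ↦ ⟪x, a y⟫`
  let c : PreInnerProductSpace.Core ℂ H :=
  { inner := fun x y => ⟪x, a y⟫_ℂ
    conj_inner_symm := fun x y => by
      show (starRingEnd ℂ) ⟪y, a x⟫_ℂ = ⟪x, a y⟫_ℂ
      rw [inner_conj_symm]
      exact hsym' x y
    re_inner_nonneg := fun x => ha.re_inner_nonneg_right x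
    add_left := fun x y z => inner_add_left x y (a z)
    smul_left := fun x y r => inner_smul_left x (a y) r }
  have hCS : ‖⟪ξ, a (a ξ)⟫_ℂ‖ * ‖⟪a ξ, a ξ⟫_ℂ‖ ≤ re ⟪ξ, a ξ⟫_ℂ * re ⟪a ξ, a (a ξ)⟫_ℂ :=
    @InnerProductSpace.Core.inner_mul_inner_self_le ℂ H _ _ _ c ξ (a ξ)
  -- unfold the inner products appearing in `hCS`
  have e1 : (⟪ξ, a (a ξ)⟫_ℂ) = ((‖a ξ‖ : ℂ) ^ 2) := by
    rw [← hsym' ξ (a ξ)]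
    exact inner_self_eq_norm_sq_to_K (𝕜 := ℂ) (a ξ)
  have hCS' : ‖a ξ‖ ^ 2 * ‖a ξ‖ ^ 2 ≤ re ⟪ξ, a ξ⟫_ℂ * re ⟪a ξ, a (a ξ)⟫_ℂ := by
    have hnn : ‖((‖a ξ‖ : ℂ) ^ 2)‖ = ‖a ξ‖ ^ 2 := by
      rw [← Complex.ofReal_pow, Complex.norm_real, Real.norm_eq_abs,
        abs_of_nonneg (by positivity)]
    calc ‖a ξ‖ ^ 2 * ‖a ξ‖ ^ 2
        = ‖(⟪ξ, a (a ξ)⟫_ℂ)‖ * ‖(⟪a ξ, a ξ⟫_ℂ)‖ := by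
          have e2 : (⟪a ξ, a ξ⟫_ℂ) = ((‖a ξ‖ : ℂ) ^ 2) := inner_self_eq_norm_sq_to_K (𝕜 := ℂ) (a ξ)
          rw [e1, e2]
          simp only [hnn]
      _ ≤ re ⟪ξ, a ξ⟫_ℂ * re ⟪a ξ, a (a ξ)⟫_ℂ := hCS
  have h2 : re ⟪a ξ, a (a ξ)⟫_ℂ ≤ ‖a‖ * ‖a ξ‖ ^ 2 := by
    calc re ⟪a ξ, a (a ξ)⟫_ℂ ≤ ‖(⟪a ξ, a (a ξ)⟫_ℂ)‖ := RCLike.re_le_norm _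
      _ ≤ ‖a ξ‖ * ‖a (a ξ)‖ := norm_inner_le_norm _ _
      _ ≤ ‖a ξ‖ * (‖a‖ * ‖a ξ‖) := by
          gcongr
          exact a.le_opNorm (a ξ)
      _ = ‖a‖ * ‖a ξ‖ ^ 2 := by ring
  have h3 : 0 ≤ re ⟪a ξ, ξ⟫_ℂ := ha.re_inner_nonneg_left ξ
  have h4 : re ⟪ξ, a ξ⟫_ℂ = re ⟪a ξ, ξ⟫_ℂ := inner_re_symm ξ (a ξ)
  by_cases hz : ‖a ξ‖ = 0
  · simpa [hz] using mul_nonneg (norm_nonneg a) h3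
  · have hX : (0 : ℝ) < ‖a ξ‖ ^ 2 := by
      have : (0 : ℝ) < ‖a ξ‖ := lt_of_le_of_ne (norm_nonneg _) (Ne.symm hz)
      positivity
    have h5 : ‖a ξ‖ ^ 2 * ‖a ξ‖ ^ 2 ≤ re ⟪a ξ, ξ⟫_ℂ * (‖a‖ * ‖a ξ‖ ^ 2) := by
      rw [← h4]
      calc ‖a ξ‖ ^ 2 * ‖a ξ‖ ^ 2 ≤ re ⟪ξ, a ξ⟫_ℂ * re ⟪a ξ, a (a ξ)⟫_ℂ := hCS'
        _ ≤ re ⟪ξ, a ξ⟫_ℂ * (‖a‖ * ‖a ξ‖ ^ 2) := by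
            apply mul_le_mul_of_nonneg_left h2
            rw [h4]; exact h3
    apply le_of_mul_le_mul_right _ hX
    nlinarith [h5]

/-- If `(a_i)` are pairwise orthogonal bounded positive operators whose sum converges in the
strong operator topology to a bounded operator `S`, then `‖S‖ = sup_i ‖a_i‖`. -/
theorem stmt_6 {I H : Type*} [NormedAddCommGroup H] [InnerProductSpace ℂ H] [CompleteSpace H]
    (a : I → H →L[ℂ] H) (hpos : ∀ i, (a i).IsPositive)
    (horth : ∀ i j, i ≠ j → a i * a j = 0)
    (S : H →L[ℂ] H) (hS : ∀ ξ : H, HasSum (fun i => a i ξ) (S ξ)) :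
    ‖S‖ = ⨆ i, ‖a i‖ := by
  classical
  have hsym : ∀ i, ((a i : H →ₗ[ℂ] H)).IsSymmetric := fun i =>
    (ContinuousLinearMap.isSelfAdjoint_iff_isSymmetric).mp (hpos i).isSelfAdjoint
  -- re of inner sums
  have hre : ∀ x y : H, HasSum (fun i => re ⟪y, a i x⟫_ℂ) (re ⟪y, S x⟫_ℂ) := by
    intro x y
    have := (RCLike.reCLM (K := ℂ)).hasSum ((innerSL ℂ y).hasSum (hS x))
    simpa using this
  -- S is self-adjoint
  have hS_sa : IsSelfAdjoint S := by
    rw [ContinuousLinearMap.isSelfAdjoint_iff_isSymmetric]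
    intro x y
    have h1 : HasSum (fun i => ⟪x, a i y⟫_ℂ) ⟪x, S y⟫_ℂ := (innerSL ℂ x).hasSum (hS y)
    have h2 : HasSum (fun i => ⟪y, a i x⟫_ℂ) ⟪y, S x⟫_ℂ := (innerSL ℂ y).hasSum (hS x)
    have h3 : HasSum (fun i => starRingEnd ℂ ⟪y, a i x⟫_ℂ) (starRingEnd ℂ ⟪y, S x⟫_ℂ) :=
      (Complex.conjCLE : ℂ ≃L[ℝ] ℂ).toContinuousLinearMap.hasSum h2
    have h4 : (fun i => starRingEnd ℂ ⟪y, a i x⟫_ℂ) = fun i => ⟪x, a i y⟫_ℂ := by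
      funext i
      rw [inner_conj_symm]
      exact hsym i x y
    rw [h4, inner_conj_symm] at h3
    exact h3.unique h1
  -- each a i ≤ S
  have h_le : ∀ i, a i ≤ S := by
    intro i
    rw [ContinuousLinearMap.le_def]
    refine ⟨(ContinuousLinearMap.isSelfAdjoint_iff_isSymmetric).mp (hS_sa.sub (hpos i).isSelfAdjoint), fun x => ?_⟩
    have hterm : ∀ j, 0 ≤ re ⟪x, a j x⟫_ℂ := by
      intro j
      rw [inner_re_symm]
      exact (hpos j).re_inner_nonneg_left x
    have hle := le_hasSum (hre x x) i (fun j _ => hterm j)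
    rw [ContinuousLinearMap.reApplyInnerSelf_apply, ContinuousLinearMap.sub_apply,
      inner_sub_left, map_sub, sub_nonneg, inner_re_symm (a i x) x, inner_re_symm (S x) x]
    exact hle
  have h_norm_le : ∀ i, ‖a i‖ ≤ ‖S‖ := fun i =>
    CStarAlgebra.norm_le_norm_of_nonneg_of_le
      ((ContinuousLinearMap.nonneg_iff_isPositive (a i)).mpr (hpos i)) (h_le i)
  rcases isEmpty_or_nonempty I with hI | hI
  · have hS0 : S = 0 := by
      ext ξ
      have h0 : HasSum (fun i => a i ξ) 0 := by
        have he : (fun i => a i ξ) = fun _ : I => (0 : H) := funext fun i => isEmptyElim i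
        rw [he]
        exact hasSum_zero
      simpa using ((hS ξ).unique h0)
    simp [hS0]
  · set M := ⨆ i, ‖a i‖ with hM_def
    have hbdd : BddAbove (Set.range fun i => ‖a i‖) :=
      ⟨‖S‖, by rintro _ ⟨i, rfl⟩; exact h_norm_le i⟩
    have hM_nonneg : 0 ≤ M := by
      obtain ⟨i₀⟩ := hI
      exact (norm_nonneg (a i₀)).trans (le_ciSup hbdd i₀)
    have h_le_M : ∀ i, ‖a i‖ ≤ M := fun i => le_ciSup hbdd i
    refine le_antisymm ?_ (Real.iSup_le h_norm_le (norm_nonneg S))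
    refine S.opNorm_le_bound hM_nonneg fun ξ => ?_
    -- key: HasSum of squared norms
    have hsum_sq : HasSum (fun i => ‖a i ξ‖ ^ 2) (‖S ξ‖ ^ 2) := by
      have h1 : HasSum (fun i => re ⟪S ξ, a i ξ⟫_ℂ) (re ⟪S ξ, S ξ⟫_ℂ) := hre ξ (S ξ)
      have h2 : ∀ i, re ⟪S ξ, a i ξ⟫_ℂ = ‖a i ξ‖ ^ 2 := by
        intro i
        have h3 : HasSum (fun j => ⟪a i ξ, a j ξ⟫_ℂ) ⟪a i ξ, S ξ⟫_ℂ :=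
          (innerSL ℂ (a i ξ)).hasSum (hS ξ)
        have h4 : (fun j => ⟪a i ξ, a j ξ⟫_ℂ)
            = fun j => if j = i then ((‖a i ξ‖ : ℂ) ^ 2) else 0 := by
          funext j
          by_cases hj : j = i
          · subst hj
            rw [if_pos rfl]
            exact inner_self_eq_norm_sq_to_K (𝕜 := ℂ) (a j ξ)
          · rw [if_neg hj]
            have hz : (a i) ((a j) ξ) = 0 := by
              rw [← ContinuousLinearMap.mul_apply, horth i j (fun h => hj h.symm)]
              rfl
            have hsym' : ⟪a i ξ, a j ξ⟫_ℂ = ⟪ξ, a i (a j ξ)⟫_ℂ := hsym i ξ (a j ξ)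
            rw [hsym', hz, inner_zero_right]
        rw [h4] at h3
        have h5 : HasSum (fun j => if j = i then ((‖a i ξ‖ : ℂ) ^ 2) else 0)
            ((‖a i ξ‖ : ℂ) ^ 2) := hasSum_ite_eq i _
        have h6 : ⟪a i ξ, S ξ⟫_ℂ = (‖a i ξ‖ : ℂ) ^ 2 := h3.unique h5
        rw [inner_re_symm, h6]
        simp [← Complex.ofReal_pow]
      have h2' : (fun i => re ⟪S ξ, a i ξ⟫_ℂ) = fun i => ‖a i ξ‖ ^ 2 := funext h2
      have h8 : re ⟪S ξ, S ξ⟫_ℂ = ‖S ξ‖ ^ 2 := inner_self_eq_norm_sq (S ξ)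
      rw [h2', h8] at h1
      exact h1
    have hsum_inner : HasSum (fun i => M * re ⟪a i ξ, ξ⟫_ℂ) (M * re ⟪S ξ, ξ⟫_ℂ) := by
      have h1 := hre ξ ξ
      have h2 : (fun i => re ⟪ξ, a i ξ⟫_ℂ) = fun i => re ⟪a i ξ, ξ⟫_ℂ := by
        funext i; exact inner_re_symm ξ (a i ξ)
      rw [h2, inner_re_symm ξ (S ξ)] at h1
      exact h1.mul_left M
    have hkey : ‖S ξ‖ ^ 2 ≤ M * re ⟪S ξ, ξ⟫_ℂ := by
      refine hasSum_le (fun i => ?_) hsum_sq hsum_inner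
      calc ‖a i ξ‖ ^ 2 ≤ ‖a i‖ * re ⟪a i ξ, ξ⟫_ℂ := aux_sq_le (a i) (hpos i) ξ
        _ ≤ M * re ⟪a i ξ, ξ⟫_ℂ := by
            apply mul_le_mul_of_nonneg_right (h_le_M i)
            exact (hpos i).re_inner_nonneg_left ξ
    have hcs : re ⟪S ξ, ξ⟫_ℂ ≤ ‖S ξ‖ * ‖ξ‖ :=
      (RCLike.re_le_norm _).trans (norm_inner_le_norm _ _)
    have hfin : ‖S ξ‖ ^ 2 ≤ M * (‖S ξ‖ * ‖ξ‖) :=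
      hkey.trans (mul_le_mul_of_nonneg_left hcs hM_nonneg)
    by_cases hz : ‖S ξ‖ = 0
    · rw [hz]; positivity
    · have hpos' : 0 < ‖S ξ‖ := lt_of_le_of_ne (norm_nonneg _) (Ne.symm hz)
      nlinarith [hfin]
end

section
/- Let ℓ²(ℕ) have canonical orthonormal basis (δ_i)_{i≥1} and let ℓ²(ℕ₀) have basis (δ_i)_{i≥0}. For ξ, η ∈ ℓ²(ℕ₀) let θ_{ξ,η} ∈ B(ℓ²(ℕ₀)) denote the rank-one operator γ ↦ ⟨γ, η⟩ ξ. Then the linear map θ₀ : span{δ_i} → B(ℓ²(ℕ₀)) defined by θ₀(δ_i) = θ_{δ_i, δ_i + δ_0} extends to a bounded, bounded-below, multiplicative linear map from the Banach algebra ℓ²(ℕ) (with pointwise multiplication) into B(ℓ²(ℕ₀)). -/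
noncomputable section

open scoped ENNReal ComplexConjugate

namespace Stmt11Aux

abbrev H : Type := lp (fun _ : ℕ => ℂ) 2

def Fpre (a γ : H) : ℕ → ℂ := fun n => match n with
  | 0 => 0
  | m+1 => a m * (γ (m+1) + γ 0)

@[simp] lemma Fpre_zero (a γ : H) : Fpre a γ 0 = 0 := rfl
@[simp] lemma Fpre_succ (a γ : H) (m : ℕ) : Fpre a γ (m+1) = a m * (γ (m+1) + γ 0) := rfl

lemma sq_eq (x y : ℝ) (hx : 0 ≤ x) (hy : 0 ≤ y) (h : x ^ (2:ℝ) = y ^ (2:ℝ)) : x = y := by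
  have h2 : (x ^ (2:ℝ)) ^ ((1:ℝ)/2) = (y ^ (2:ℝ)) ^ ((1:ℝ)/2) := by rw [h]
  rwa [← Real.rpow_mul hx, ← Real.rpow_mul hy, show (2:ℝ)*(1/2) = 1 by norm_num,
    Real.rpow_one, Real.rpow_one] at h2

lemma coord_bound (γ : H) (n : ℕ) : ‖γ n + γ 0‖ ≤ 2 * ‖γ‖ := by
  calc ‖γ n + γ 0‖ ≤ ‖γ n‖ + ‖γ 0‖ := norm_add_le _ _
    _ ≤ ‖γ‖ + ‖γ‖ := add_le_add (lp.norm_apply_le_norm (by norm_num) γ n)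
        (lp.norm_apply_le_norm (by norm_num) γ 0)
    _ = 2 * ‖γ‖ := by ring

lemma summable_sq (a : H) : Summable fun n => ‖a n‖ ^ (2:ℝ) := by
  simpa using (lp.memℓp a).summable (p := 2) (by norm_num)

lemma bound_succ (a γ : H) (n : ℕ) :
    ‖Fpre a γ (n+1)‖ ^ (2:ℝ) ≤ (2 * ‖γ‖)^(2:ℝ) * ‖a n‖ ^ (2:ℝ) := by
  rw [Fpre_succ, norm_mul, ← Real.mul_rpow (by positivity) (norm_nonneg _),
    mul_comm (2 * ‖γ‖)]
  apply Real.rpow_le_rpow (by positivity) _ (by norm_num)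
  exact mul_le_mul_of_nonneg_left (coord_bound γ _) (norm_nonneg _)

lemma summable_F (a γ : H) : Summable fun n => ‖Fpre a γ n‖ ^ (2:ℝ) := by
  rw [← summable_nat_add_iff 1]
  exact Summable.of_nonneg_of_le (fun n => Real.rpow_nonneg (norm_nonneg _) _)
    (bound_succ a γ) (((summable_sq a).mul_left _))

lemma mem_F (a γ : H) : Memℓp (Fpre a γ) 2 :=
  memℓp_gen (by simpa using summable_F a γ)

def Fel (a γ : H) : H := ⟨Fpre a γ, mem_F a γ⟩

@[simp] lemma Fel_apply (a γ : H) (n : ℕ) : (Fel a γ) n = Fpre a γ n := rfl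

lemma tsum_F_le (a γ : H) :
    ∑' n, ‖Fpre a γ n‖ ^ (2:ℝ) ≤ (2 * ‖a‖ * ‖γ‖) ^ (2:ℝ) := by
  rw [Summable.tsum_eq_zero_add (summable_F a γ)]
  simp only [Fpre_zero, norm_zero]
  rw [Real.zero_rpow (by norm_num), zero_add]
  calc ∑' n, ‖Fpre a γ (n+1)‖ ^ (2:ℝ)
      ≤ ∑' n, (2 * ‖γ‖)^(2:ℝ) * ‖a n‖ ^ (2:ℝ) := by
        refine Summable.tsum_le_tsum (bound_succ a γ) ?_ ((summable_sq a).mul_left _)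
        exact (summable_nat_add_iff 1).mpr (summable_F a γ)
    _ = (2 * ‖γ‖)^(2:ℝ) * ∑' n, ‖a n‖ ^ (2:ℝ) := tsum_mul_left
    _ = (2 * ‖γ‖)^(2:ℝ) * ‖a‖ ^ (2:ℝ) := by
        congr 1
        simpa using (lp.norm_rpow_eq_tsum (p := 2) (by norm_num) a).symm
    _ = (2 * ‖a‖ * ‖γ‖) ^ (2:ℝ) := by
        rw [← Real.mul_rpow (by positivity) (norm_nonneg _)]
        ring_nf

lemma norm_Fel_le (a γ : H) : ‖Fel a γ‖ ≤ 2 * ‖a‖ * ‖γ‖ := by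
  apply lp.norm_le_of_tsum_le (p := 2) (by norm_num) (by positivity)
  simpa using tsum_F_le a γ

def T (a : H) : H →L[ℂ] H :=
  LinearMap.mkContinuous
    { toFun := fun γ => Fel a γ
      map_add' := fun γ γ' => by
        apply lp.ext; funext n
        simp only [lp.coeFn_add, Pi.add_apply, Fel_apply]
        cases n with
        | zero => simp
        | succ m => simp [Fpre]; ring
      map_smul' := fun c γ => by
        apply lp.ext; funext n
        simp only [lp.coeFn_smul, Pi.smul_apply, Fel_apply, RingHom.id_apply]
        cases n with
        | zero => simp
        | succ m => simp [Fpre, smul_eq_mul]; ring }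
    (2 * ‖a‖) (fun γ => by simpa [mul_assoc] using norm_Fel_le a γ)

@[simp] lemma T_apply (a γ : H) (n : ℕ) : (T a γ) n = Fpre a γ n := rfl

def θlin : H →ₗ[ℂ] (H →L[ℂ] H) where
  toFun := T
  map_add' := fun a a' => by
    apply ContinuousLinearMap.ext; intro γ
    apply lp.ext; funext n
    simp only [ContinuousLinearMap.add_apply, lp.coeFn_add, Pi.add_apply, T_apply]
    cases n with
    | zero => simp
    | succ m => simp [Fpre, lp.coeFn_add]; ring
  map_smul' := fun c a => by
    apply ContinuousLinearMap.ext; intro γ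
    apply lp.ext; funext n
    simp only [RingHom.id_apply, ContinuousLinearMap.smul_apply, lp.coeFn_smul,
      Pi.smul_apply, T_apply, smul_eq_mul]
    cases n with
    | zero => simp
    | succ m => simp [Fpre, lp.coeFn_smul, smul_eq_mul]; ring

def θ : H →L[ℂ] (H →L[ℂ] H) :=
  LinearMap.mkContinuous θlin 2 (fun a => by
    apply ContinuousLinearMap.opNorm_le_bound _ (by positivity)
    intro γ
    exact le_of_le_of_eq (norm_Fel_le a γ) (by ring))

@[simp] lemma θ_apply (a γ : H) (n : ℕ) : (θ a γ) n = Fpre a γ n := rfl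

-- property 1
lemma prop1 (i : ℕ) : θ (lp.single 2 i 1) =
    (innerSL ℂ (lp.single 2 (i + 1) 1 + lp.single 2 0 1)).smulRight
      (lp.single 2 (i + 1) (1 : ℂ)) := by
  apply ContinuousLinearMap.ext; intro γ
  apply lp.ext; funext n
  have hinner : (innerSL ℂ (lp.single 2 (i + 1) 1 + lp.single 2 0 1)) γ
      = γ (i+1) + γ 0 := by
    simp only [innerSL_apply_apply, inner_add_left]
    rw [lp.inner_single_left, lp.inner_single_left]
    simp [RCLike.inner_apply]
  simp only [ContinuousLinearMap.smulRight_apply, hinner, lp.coeFn_smul, Pi.smul_apply,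
    θ_apply, smul_eq_mul]
  cases n with
  | zero =>
    simp [lp.single_apply]
  | succ m =>
    rw [Fpre_succ, lp.single_apply, lp.single_apply]
    by_cases h : m = i
    · subst h; simp
    · simp [h, fun hh => h (Nat.succ_injective hh)]

-- property 2
lemma prop2 (a b c : H) (h : ∀ n, c n = a n * b n) : θ c = θ a * θ b := by
  apply ContinuousLinearMap.ext; intro γ
  apply lp.ext; funext n
  rw [ContinuousLinearMap.mul_apply]
  cases n with
  | zero => simp
  | succ m =>
    simp only [θ_apply, Fpre_succ, Fpre_zero, h m]
    ring

-- property 3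
lemma prop3 (a : H) : 1 * ‖a‖ ≤ ‖θ a‖ := by
  rw [one_mul]
  set e0 : H := lp.single 2 0 (1:ℂ) with he0
  have he0norm : ‖e0‖ = 1 := by
    exact (lp.norm_single (E := fun _ : ℕ => ℂ) (p := 2) (by norm_num) 0 (1:ℂ)).trans norm_one
  have hθae0 : ‖θ a e0‖ = ‖a‖ := by
    have h1 : ‖θ a e0‖ ^ (2:ℝ) = ∑' n, ‖(θ a e0) n‖ ^ (2:ℝ) := by
      simpa using lp.norm_rpow_eq_tsum (p := 2) (by norm_num) (θ a e0)
    have h2 : ‖a‖ ^ (2:ℝ) = ∑' n, ‖a n‖ ^ (2:ℝ) := by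
      simpa using lp.norm_rpow_eq_tsum (p := 2) (by norm_num) a
    have hcoord : ∀ n, (θ a e0) (n+1) = a n := by
      intro n
      rw [θ_apply, Fpre_succ, he0, lp.single_apply, lp.single_apply]
      simp
    have h3 : ∑' n, ‖(θ a e0) n‖ ^ (2:ℝ) = ∑' n, ‖a n‖ ^ (2:ℝ) := by
      simp only [θ_apply]
      rw [Summable.tsum_eq_zero_add (summable_F a e0)]
      simp only [θ_apply] at hcoord ⊢
      simp only [Fpre_zero, norm_zero, Real.zero_rpow (by norm_num : (2:ℝ) ≠ 0), zero_add]
      exact tsum_congr fun n => by rw [show Fpre a e0 (n+1) = a n from hcoord n]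
    have h4 : ‖θ a e0‖ ^ (2:ℝ) = ‖a‖ ^ (2:ℝ) := by rw [h1, h3, h2]
    exact sq_eq _ _ (norm_nonneg _) (norm_nonneg _) h4
  calc ‖a‖ = ‖θ a e0‖ := hθae0.symm
    _ ≤ ‖θ a‖ * ‖e0‖ := (θ a).le_opNorm e0
    _ = ‖θ a‖ := by rw [he0norm, mul_one]

end Stmt11Aux

end

/-- The map `θ₀` determined on basis vectors by `θ₀(δ_i) = θ_{δ_i, δ_i + δ_0}` (for `i ≥ 1`,
where `θ_{ξ,η} : γ ↦ ⟨γ,η⟩ξ` is a rank-one operator) extends to a bounded, bounded-below,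
multiplicative linear map from `ℓ²(ℕ)` with pointwise multiplication into `B(ℓ²(ℕ₀))`.
Here `ℓ²(ℕ)` is indexed by Lean's `ℕ`, with its `i`-th basis vector sent to
`θ_{δ_{i+1}, δ_{i+1} + δ_0}`. -/
theorem stmt_11 :
    ∃ θ : lp (fun _ : ℕ => ℂ) 2 →L[ℂ] (lp (fun _ : ℕ => ℂ) 2 →L[ℂ] lp (fun _ : ℕ => ℂ) 2),
      (∀ i : ℕ, θ (lp.single 2 i 1) =
        (innerSL ℂ (lp.single 2 (i + 1) 1 + lp.single 2 0 1)).smulRight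
          (lp.single 2 (i + 1) (1 : ℂ))) ∧
      (∀ a b c : lp (fun _ : ℕ => ℂ) 2,
        (∀ n, (c : ∀ _ : ℕ, ℂ) n = (a : ∀ _ : ℕ, ℂ) n * (b : ∀ _ : ℕ, ℂ) n) →
          θ c = θ a * θ b) ∧
      ∃ C : ℝ, 0 < C ∧ ∀ a, C * ‖a‖ ≤ ‖θ a‖ := by
  exact ⟨Stmt11Aux.θ, Stmt11Aux.prop1, fun a b c h => Stmt11Aux.prop2 a b c h,
    1, one_pos, Stmt11Aux.prop3⟩
end

section
/- With θ₀ : ℓ²(ℕ) → B(ℓ²(ℕ₀)) the bounded-below algebra homomorphism determined by θ₀(δ_i) = θ_{δ_i, δ_i + δ_0}, and d ∈ ℕ, the map θ = id ⊗ θ₀ from ℓ²(ℕ, M_d(ℂ)) ≅ M_d(ℂ) ⊗ ℓ²(ℕ) (pointwise multiplication) into M_d(ℂ) ⊗ B(ℓ²(ℕ₀)) ≅ B(ℂ^d ⊗ ℓ²(ℕ₀)) is a bounded, bounded-below algebra homomorphism. -/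
noncomputable section

namespace Stmt12

open scoped ENNReal

set_option synthInstance.maxHeartbeats 1000000
set_option maxHeartbeats 1000000

variable {d : ℕ}

local notation "Esp" => EuclideanSpace ℂ (Fin d)
local notation "Hsp" => lp (fun _ : ℕ => EuclideanSpace ℂ (Fin d)) 2
local notation "Asp" => lp (fun _ : ℕ => EuclideanSpace ℂ (Fin d) →L[ℂ] EuclideanSpace ℂ (Fin d)) 2

lemma key (x : ℝ) : x ^ ((2 : ℝ≥0∞)).toReal = x ^ (2 : ℕ) := by
  rw [show ((2 : ℝ≥0∞)).toReal = ((2 : ℕ) : ℝ) by norm_num, Real.rpow_natCast]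

lemma hp2 : 0 < ((2 : ℝ≥0∞)).toReal := by norm_num

/-- The underlying sequence of `θ a γ`. -/
def pre (a : Asp) (γ : Hsp) : ∀ _ : ℕ, Esp :=
  fun n => Nat.casesOn n 0 (fun i => a i (γ (i + 1) + γ 0))

@[simp] lemma pre_zero (a : Asp) (γ : Hsp) : pre a γ 0 = 0 := rfl
@[simp] lemma pre_succ (a : Asp) (γ : Hsp) (i : ℕ) :
    pre a γ (i + 1) = a i (γ (i + 1) + γ 0) := rfl

lemma summable_sq (a : Asp) : Summable fun i : ℕ => ‖a i‖ ^ (2 : ℕ) := by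
  have := (lp.memℓp a).summable hp2
  simpa only [key] using this

lemma norm_pre_succ_le (a : Asp) (γ : Hsp) (i : ℕ) :
    ‖pre a γ (i + 1)‖ ≤ ‖a i‖ * (2 * ‖γ‖) := by
  calc ‖a i (γ (i + 1) + γ 0)‖ ≤ ‖a i‖ * ‖γ (i + 1) + γ 0‖ :=
        ContinuousLinearMap.le_opNorm _ _
    _ ≤ ‖a i‖ * (2 * ‖γ‖) := by
        refine mul_le_mul_of_nonneg_left ?_ (norm_nonneg _)
        calc ‖γ (i + 1) + γ 0‖ ≤ ‖γ (i + 1)‖ + ‖γ 0‖ := norm_add_le _ _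
          _ ≤ ‖γ‖ + ‖γ‖ := add_le_add (lp.norm_apply_le_norm two_ne_zero γ _)
              (lp.norm_apply_le_norm two_ne_zero γ _)
          _ = 2 * ‖γ‖ := by ring

lemma summable_pre_sq (a : Asp) (γ : Hsp) :
    Summable fun n : ℕ => ‖pre a γ n‖ ^ (2 : ℕ) := by
  have hg : Summable fun n : ℕ => (‖a n‖ * (2 * ‖γ‖)) ^ (2 : ℕ) := by
    simpa only [mul_pow] using (summable_sq a).mul_right ((2 * ‖γ‖) ^ (2 : ℕ))
  have hg' : Summable fun n : ℕ =>
      (Nat.casesOn n 0 (fun i => (‖a i‖ * (2 * ‖γ‖)) ^ (2 : ℕ)) : ℝ) :=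
    (summable_nat_add_iff 1).mp hg
  refine hg'.of_nonneg_of_le (fun n => by positivity) (fun n => ?_)
  cases n with
  | zero => simp
  | succ i =>
      exact pow_le_pow_left₀ (norm_nonneg _) (norm_pre_succ_le a γ i) 2

lemma memℓp_pre (a : Asp) (γ : Hsp) : Memℓp (pre a γ) 2 := by
  apply memℓp_gen
  simpa only [key] using summable_pre_sq a γ

/-- `θ a γ` as an element of `ℓ²`. -/
def app (a : Asp) (γ : Hsp) : Hsp := ⟨pre a γ, memℓp_pre a γ⟩

@[simp] lemma app_apply (a : Asp) (γ : Hsp) (n : ℕ) :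
    (app a γ : ∀ _ : ℕ, Esp) n = pre a γ n := rfl

lemma tsum_sq_le (a : Asp) : ∑' i : ℕ, ‖a i‖ ^ (2 : ℕ) ≤ ‖a‖ ^ (2 : ℕ) := by
  have := lp.norm_rpow_eq_tsum hp2 a
  simp only [key] at this
  exact this.symm.le

lemma norm_app_le (a : Asp) (γ : Hsp) : ‖app a γ‖ ≤ 2 * ‖a‖ * ‖γ‖ := by
  refine lp.norm_le_of_tsum_le hp2 (by positivity) ?_
  simp only [key]
  have h1 : Summable fun n : ℕ => ‖pre a γ n‖ ^ (2 : ℕ) := summable_pre_sq a γ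
  calc (∑' n : ℕ, ‖(app a γ : ∀ _ : ℕ, Esp) n‖ ^ (2 : ℕ))
      = ∑' i : ℕ, ‖pre a γ (i + 1)‖ ^ (2 : ℕ) := by
        simp only [app_apply]
        rw [Summable.tsum_eq_zero_add h1]; simp
    _ ≤ ∑' i : ℕ, (‖a i‖ * (2 * ‖γ‖)) ^ (2 : ℕ) := by
        refine Summable.tsum_le_tsum (fun i => pow_le_pow_left₀ (norm_nonneg _)
          (norm_pre_succ_le a γ i) 2) ((summable_nat_add_iff 1).mpr h1) ?_
        simpa only [mul_pow] using (summable_sq a).mul_right ((2 * ‖γ‖) ^ (2 : ℕ))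
    _ = (∑' i : ℕ, ‖a i‖ ^ (2 : ℕ)) * (2 * ‖γ‖) ^ (2 : ℕ) := by
        simp only [mul_pow]; exact tsum_mul_right
    _ ≤ ‖a‖ ^ (2 : ℕ) * (2 * ‖γ‖) ^ (2 : ℕ) := by
        refine mul_le_mul_of_nonneg_right (tsum_sq_le a) (by positivity)
    _ = (2 * ‖a‖ * ‖γ‖) ^ (2 : ℕ) := by ring

/-- `θ a` as a continuous linear map. -/
def θaux (a : Asp) : Hsp →L[ℂ] Hsp :=
  LinearMap.mkContinuous
    { toFun := fun γ => app a γ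
      map_add' := fun γ γ' => by
        ext n
        cases n with
        | zero => simp [lp.coeFn_add]
        | succ i =>
            simp only [app_apply, pre_succ, lp.coeFn_add, Pi.add_apply]
            rw [add_add_add_comm, map_add]
      map_smul' := fun c γ => by
        ext n
        cases n with
        | zero => simp [lp.coeFn_smul]
        | succ i =>
            simp only [app_apply, pre_succ, lp.coeFn_smul, Pi.smul_apply,
              RingHom.id_apply]
            rw [← smul_add, map_smul] }
    (2 * ‖a‖) (fun γ => norm_app_le a γ)

@[simp] lemma θaux_apply (a : Asp) (γ : Hsp) (n : ℕ) :
    (θaux a γ : ∀ _ : ℕ, Esp) n = pre a γ n := rfl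

lemma θaux_norm_le (a : Asp) : ‖θaux a‖ ≤ 2 * ‖a‖ :=
  LinearMap.mkContinuous_norm_le _ (by positivity) _

/-- `θ` as a linear map. -/
def θlin (d : ℕ) : Asp →ₗ[ℂ] (Hsp →L[ℂ] Hsp) where
  toFun := θaux
  map_add' a b := by
    ext γ n
    cases n with
    | zero => simp [lp.coeFn_add]
    | succ i =>
        simp [lp.coeFn_add, Pi.add_apply, ContinuousLinearMap.add_apply]
  map_smul' c a := by
    ext γ n
    cases n with
    | zero => simp [lp.coeFn_smul]
    | succ i =>
        simp [lp.coeFn_smul, Pi.smul_apply, ContinuousLinearMap.smul_apply]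

/-- `θ` as a continuous linear map. -/
def θ (d : ℕ) : Asp →L[ℂ] (Hsp →L[ℂ] Hsp) :=
  LinearMap.mkContinuous (θlin d) 2 (fun a => by
    exact θaux_norm_le a)

@[simp] lemma θ_apply (a : Asp) (γ : Hsp) (n : ℕ) :
    (θ d a γ : ∀ _ : ℕ, Esp) n = pre a γ n := rfl


/-- Standard basis vectors of `ℂ^d`. -/
def e (j : Fin d) : Esp := EuclideanSpace.single j 1

@[simp] lemma norm_e (j : Fin d) : ‖e j‖ = 1 := by
  simp [e, EuclideanSpace.norm_single]

/-- `δ j` is the element of `ℓ²(ℕ, ℂ^d)` supported at `0` with value `e j`. -/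
def δ (j : Fin d) : Hsp := lp.single 2 0 (e j)

@[simp] lemma δ_zero (j : Fin d) : (δ j : ∀ _ : ℕ, Esp) 0 = e j :=
  lp.single_apply_self (E := fun _ : ℕ => Esp) 2 0 (e j)

@[simp] lemma δ_succ (j : Fin d) (i : ℕ) : (δ j : ∀ _ : ℕ, Esp) (i + 1) = 0 :=
  lp.single_apply_ne (E := fun _ : ℕ => Esp) 2 0 (e j) (Nat.succ_ne_zero i)

lemma norm_δ (j : Fin d) : ‖δ j‖ = 1 := by
  have := lp.norm_single (E := fun _ : ℕ => Esp) (p := 2) (by norm_num) 0 (e j)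
  simpa [δ] using this

lemma sqrt_helper {a b : ℝ} (ha : 0 ≤ a) (hb : 0 ≤ b) (h : a ^ (2 : ℕ) ≤ b ^ (2 : ℕ)) :
    a ≤ b := by nlinarith

lemma opnorm_sq_le (T : Esp →L[ℂ] Esp) :
    ‖T‖ ^ (2 : ℕ) ≤ ∑ j : Fin d, ‖T (e j)‖ ^ (2 : ℕ) := by
  classical
  set S := ∑ j : Fin d, ‖T (e j)‖ ^ (2 : ℕ) with hSdef
  have hS : 0 ≤ S := Finset.sum_nonneg fun j _ => by positivity
  have hb : ‖T‖ ≤ Real.sqrt S := by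
    refine T.opNorm_le_bound (Real.sqrt_nonneg _) fun x => ?_
    have hx : T x = ∑ j : Fin d, x j • T (e j) := by
      conv_lhs => rw [← (EuclideanSpace.basisFun (Fin d) ℂ).sum_repr x]
      rw [map_sum]
      simp [e]
    have h1 : ‖T x‖ ≤ ∑ j : Fin d, ‖x j‖ * ‖T (e j)‖ := by
      rw [hx]
      refine (norm_sum_le _ _).trans_eq ?_
      simp [norm_smul]
    have hcs := Finset.sum_mul_sq_le_sq_mul_sq Finset.univ
      (fun j : Fin d => ‖x j‖) (fun j : Fin d => ‖T (e j)‖)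
    have hxn : ∑ j : Fin d, ‖x j‖ ^ (2 : ℕ) = ‖x‖ ^ (2 : ℕ) := by
      rw [EuclideanSpace.norm_eq, Real.sq_sqrt]
      positivity
    have h2 : (∑ j : Fin d, ‖x j‖ * ‖T (e j)‖) ^ (2 : ℕ) ≤
        (Real.sqrt S * ‖x‖) ^ (2 : ℕ) := by
      rw [mul_pow, Real.sq_sqrt hS]
      calc (∑ j : Fin d, ‖x j‖ * ‖T (e j)‖) ^ (2 : ℕ) ≤
          (∑ j : Fin d, ‖x j‖ ^ (2 : ℕ)) * ∑ j : Fin d, ‖T (e j)‖ ^ (2 : ℕ) := hcs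
        _ = S * ‖x‖ ^ (2 : ℕ) := by rw [hxn, ← hSdef]; ring
    exact h1.trans (sqrt_helper
      (Finset.sum_nonneg fun j _ => mul_nonneg (norm_nonneg _) (norm_nonneg _))
      (mul_nonneg (Real.sqrt_nonneg _) (norm_nonneg _)) h2)
  calc ‖T‖ ^ (2 : ℕ) ≤ Real.sqrt S ^ (2 : ℕ) :=
        pow_le_pow_left₀ (norm_nonneg _) hb 2
    _ = S := Real.sq_sqrt hS

lemma summable_ae (a : Asp) (j : Fin d) :
    Summable fun i : ℕ => ‖a i (e j)‖ ^ (2 : ℕ) := by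
  refine (summable_sq a).of_nonneg_of_le (fun i => by positivity) (fun i => ?_)
  refine pow_le_pow_left₀ (norm_nonneg _) ?_ 2
  calc ‖a i (e j)‖ ≤ ‖a i‖ * ‖e j‖ := ContinuousLinearMap.le_opNorm _ _
    _ = ‖a i‖ := by simp

lemma tsum_ae_le (a : Asp) (j : Fin d) :
    ∑' i : ℕ, ‖a i (e j)‖ ^ (2 : ℕ) ≤ ‖θ d a‖ ^ (2 : ℕ) := by
  have h1 : ‖θ d a (δ j)‖ ^ (2 : ℕ) = ∑' i : ℕ, ‖a i (e j)‖ ^ (2 : ℕ) := by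
    have h := lp.norm_rpow_eq_tsum hp2 (θ d a (δ j))
    simp only [key] at h
    rw [h]
    have : ∀ n : ℕ, ‖(θ d a (δ j) : ∀ _ : ℕ, Esp) n‖ ^ (2 : ℕ) =
        ‖pre a (δ j) n‖ ^ (2 : ℕ) := fun n => rfl
    simp only [this]
    rw [Summable.tsum_eq_zero_add (summable_pre_sq a (δ j))]
    simp
  rw [← h1]
  calc ‖θ d a (δ j)‖ ^ (2 : ℕ) ≤ (‖θ d a‖ * ‖δ j‖) ^ (2 : ℕ) :=
        pow_le_pow_left₀ (norm_nonneg _) ((θ d a).le_opNorm _) 2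
    _ = ‖θ d a‖ ^ (2 : ℕ) := by rw [norm_δ]; ring

lemma norm_sq_le (a : Asp) :
    ‖a‖ ^ (2 : ℕ) ≤ ((d : ℝ) + 1) * ‖θ d a‖ ^ (2 : ℕ) := by
  have h0 : ‖a‖ ^ (2 : ℕ) = ∑' i : ℕ, ‖a i‖ ^ (2 : ℕ) := by
    have := lp.norm_rpow_eq_tsum hp2 a
    simpa only [key] using this
  calc ‖a‖ ^ (2 : ℕ) = ∑' i : ℕ, ‖a i‖ ^ (2 : ℕ) := h0
    _ ≤ ∑' i : ℕ, ∑ j : Fin d, ‖a i (e j)‖ ^ (2 : ℕ) := by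
        refine Summable.tsum_le_tsum (fun i => opnorm_sq_le (a i)) (summable_sq a) ?_
        exact summable_sum fun j _ => summable_ae a j
    _ = ∑ j : Fin d, ∑' i : ℕ, ‖a i (e j)‖ ^ (2 : ℕ) :=
        Summable.tsum_finsetSum fun j _ => summable_ae a j
    _ ≤ ∑ j : Fin d, ‖θ d a‖ ^ (2 : ℕ) :=
        Finset.sum_le_sum fun j _ => tsum_ae_le a j
    _ = (d : ℝ) * ‖θ d a‖ ^ (2 : ℕ) := by
        simp [Finset.sum_const, Finset.card_univ, nsmul_eq_mul]
    _ ≤ ((d : ℝ) + 1) * ‖θ d a‖ ^ (2 : ℕ) := by nlinarith [sq_nonneg ‖θ d a‖]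

lemma bounded_below (a : Asp) :
    (Real.sqrt ((d : ℝ) + 1))⁻¹ * ‖a‖ ≤ ‖θ d a‖ := by
  have hs : (0 : ℝ) < Real.sqrt ((d : ℝ) + 1) := Real.sqrt_pos.mpr (by positivity)
  rw [inv_mul_le_iff₀ hs]
  refine sqrt_helper (norm_nonneg _) (by positivity) ?_
  rw [mul_pow, Real.sq_sqrt (by positivity : (0:ℝ) ≤ (d : ℝ) + 1)]
  exact norm_sq_le a

end Stmt12

end

/-- With `θ₀ : ℓ²(ℕ) → B(ℓ²(ℕ₀))` the bounded-below homomorphism determined by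
`θ₀(δ_i) = θ_{δ_i, δ_i+δ_0}`, the map `θ = id ⊗ θ₀` from `ℓ²(ℕ, M_d(ℂ))` (pointwise
multiplication) into `M_d(ℂ) ⊗ B(ℓ²(ℕ₀)) ≅ B(ℂ^d ⊗ ℓ²(ℕ₀))` is a bounded, bounded-below
algebra homomorphism.  Here `ℂ^d ⊗ ℓ²(ℕ₀)` is modelled as `ℓ²(ℕ, ℂ^d)`, `M_d(ℂ)` as
`B(ℂ^d)`, and `θ` acts by `(θ(a)γ)_0 = 0`, `(θ(a)γ)_{i+1} = a_i(γ_{i+1} + γ_0)`. -/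
theorem stmt_12 (d : ℕ) :
    ∃ θ : lp (fun _ : ℕ => EuclideanSpace ℂ (Fin d) →L[ℂ] EuclideanSpace ℂ (Fin d)) 2 →L[ℂ]
        (lp (fun _ : ℕ => EuclideanSpace ℂ (Fin d)) 2 →L[ℂ]
          lp (fun _ : ℕ => EuclideanSpace ℂ (Fin d)) 2),
      (∀ a γ,
        ((θ a γ : ∀ _ : ℕ, EuclideanSpace ℂ (Fin d)) 0 = 0) ∧
        (∀ i : ℕ, (θ a γ : ∀ _ : ℕ, EuclideanSpace ℂ (Fin d)) (i + 1) =
          (a : ∀ _ : ℕ, EuclideanSpace ℂ (Fin d) →L[ℂ] EuclideanSpace ℂ (Fin d)) i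
            ((γ : ∀ _ : ℕ, EuclideanSpace ℂ (Fin d)) (i + 1) +
              (γ : ∀ _ : ℕ, EuclideanSpace ℂ (Fin d)) 0))) ∧
      (∀ a b c : lp (fun _ : ℕ => EuclideanSpace ℂ (Fin d) →L[ℂ] EuclideanSpace ℂ (Fin d)) 2,
        (∀ n : ℕ,
          (c : ∀ _ : ℕ, EuclideanSpace ℂ (Fin d) →L[ℂ] EuclideanSpace ℂ (Fin d)) n =
            (a : ∀ _ : ℕ, EuclideanSpace ℂ (Fin d) →L[ℂ] EuclideanSpace ℂ (Fin d)) n *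
              (b : ∀ _ : ℕ, EuclideanSpace ℂ (Fin d) →L[ℂ] EuclideanSpace ℂ (Fin d)) n) →
          θ c = θ a * θ b) ∧
      ∃ C : ℝ, 0 < C ∧ ∀ a, C * ‖a‖ ≤ ‖θ a‖ := by
  classical
  refine ⟨Stmt12.θ d, fun a γ => ⟨rfl, fun i => rfl⟩, ?_, ?_⟩
  · -- multiplicativity
    intro a b c h
    ext γ n
    cases n with
    | zero =>
        simp only [Stmt12.θ_apply, Stmt12.pre_zero, ContinuousLinearMap.mul_apply,
          Stmt12.θ_apply]
    | succ i =>
        simp only [Stmt12.θ_apply, Stmt12.pre_succ, ContinuousLinearMap.mul_apply,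
          Stmt12.pre_zero, add_zero, h i, ContinuousLinearMap.mul_apply']
  · -- bounded below
    exact ⟨(Real.sqrt ((d : ℝ) + 1))⁻¹, by positivity, fun a => Stmt12.bounded_below a⟩
end

section
/- Let H be a Hilbert space, A a Banach *-algebra, and π : A → B(H) a homomorphism. Let H_e be the closed linear span of {π(a)ξ : a ∈ A, ξ ∈ H}, and suppose there is a bounded (not necessarily orthogonal) idempotent Q ∈ B(H) with range H_e such that π(a)Q = π(a) for all a ∈ A. If the restriction π_e of π to H_e (i.e. a ↦ π(a)|_{H_e} ∈ B(H_e)) is similar to a *-representation, then π is similar to a *-representation. -/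
/-- Let `π : A → B(H)` be a homomorphism of a Banach *-algebra, `H_e` the essential subspace,
and suppose there is a bounded idempotent `Q` with range `H_e` and `π(a)Q = π(a)` for all `a`.
If the restriction `π_e` of `π` to `H_e` is similar (via `T₀`) to a *-representation `σ`,
then `π` is similar to a *-representation. -/
theorem stmt_15 {H A : Type*} [NormedAddCommGroup H] [InnerProductSpace ℂ H] [CompleteSpace H]
    [NormedRing A] [StarRing A] [NormedStarGroup A] [NormedAlgebra ℂ A] [CompleteSpace A]
    (π : A →ₗ[ℂ] H →L[ℂ] H) (hmul : ∀ a b, π (a * b) = π a * π b)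
    (He : Submodule ℂ H)
    (hHe : He = (Submodule.span ℂ {v : H | ∃ a ξ, v = π a ξ}).topologicalClosure)
    (Q : H →L[ℂ] H) (hQidem : Q * Q = Q) (hQrange : LinearMap.range (Q : H →ₗ[ℂ] H) = He)
    (hQ : ∀ a, π a * Q = π a)
    (T₀ : He ≃L[ℂ] He) (σ : A → He →L[ℂ] He)
    (hσ : ∀ (a : A) (ξ : He), (T₀.symm (σ a ξ) : H) = π a (T₀.symm ξ : H))
    (hσmul : ∀ a b, σ (a * b) = σ a * σ b)
    (hσstar : ∀ (a : A) (ξ η : He),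
      (inner ℂ ((σ (star a) ξ : He) : H) ((η : H)) : ℂ) = inner ℂ (ξ : H) ((σ a η : He) : H)) :
    ∃ T : H ≃L[ℂ] H, ∀ a : A,
      (T : H →L[ℂ] H) ∘L π (star a) ∘L (T.symm : H →L[ℂ] H) =
        ContinuousLinearMap.adjoint ((T : H →L[ℂ] H) ∘L π a ∘L (T.symm : H →L[ℂ] H)) := by
  haveI : CompleteSpace He := by
    rw [hHe]; exact (Submodule.isClosed_topologicalClosure _).completeSpace_coe
  -- basic facts about Q
  have hQmem : ∀ x : H, Q x ∈ He := fun x => hQrange ▸ LinearMap.mem_range_self _ x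
  have hQQ : ∀ x : H, Q (Q x) = Q x := fun x => by
    have := congrArg (fun f : H →L[ℂ] H => f x) hQidem
    simpa using this
  have hQfix : ∀ z : H, z ∈ He → Q z = z := by
    intro z hz
    rw [← hQrange] at hz
    obtain ⟨w, rfl⟩ := hz
    exact hQQ w
  have hπQ : ∀ (a : A) (x : H), π a (Q x) = π a x := fun a x => by
    have := congrArg (fun f : H →L[ℂ] H => f x) (hQ a)
    simpa using this
  set P : H →L[ℂ] He := He.orthogonalProjectionOnto with hP
  have hPfix : ∀ z : He, P (z : H) = z := fun z => Submodule.orthogonalProjectionOnto_mem_subspace_eq_self z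
  set Qc : H →L[ℂ] He := Q.codRestrict He hQmem with hQc
  have hQcapp : ∀ x : H, ((Qc x : He) : H) = Q x := fun x => rfl
  -- forward and inverse maps
  set Tf : H →L[ℂ] H :=
    He.subtypeL ∘L (T₀ : He →L[ℂ] He) ∘L Qc +
      (ContinuousLinearMap.id ℂ H - He.subtypeL ∘L P) ∘L (ContinuousLinearMap.id ℂ H - Q)
    with hTf
  set Ti : H →L[ℂ] H :=
    He.subtypeL ∘L (T₀.symm : He →L[ℂ] He) ∘L P +
      (ContinuousLinearMap.id ℂ H - Q) ∘L (ContinuousLinearMap.id ℂ H - He.subtypeL ∘L P)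
    with hTi
  have hTfapp : ∀ x : H, Tf x = ((T₀ (Qc x) : He) : H) + ((x - Q x) - (P (x - Q x) : H)) := by
    intro x; simp [hTf, ContinuousLinearMap.sub_apply]; abel
  have hTiapp : ∀ y : H, Ti y = ((T₀.symm (P y) : He) : H) + ((y - (P y : H)) - Q (y - (P y : H))) := by
    intro y; simp [hTi, ContinuousLinearMap.sub_apply]; abel
  -- left inverse
  have hleft : ∀ x : H, Ti (Tf x) = x := by
    intro x
    rw [hTfapp x, hTiapp]
    set u : He := T₀ (Qc x) with hu
    set w : H := x - Q x with hw
    have hPw : P ((u : H) + (w - (P w : H))) = u := by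
      have h1 : P (w - (P w : H)) = 0 := by
        rw [map_sub, hPfix (P w), sub_self]
      rw [map_add, h1, add_zero, hPfix]
    rw [hPw]
    have hrest : (u : H) + (w - (P w : H)) - (u : H) = w - (P w : H) := by abel
    rw [hrest]
    have hQv : Q (w - (P w : H)) = -(P w : H) := by
      rw [map_sub]
      have : Q w = 0 := by rw [hw, map_sub, hQQ, sub_self]
      rw [this, hQfix _ (P w).2, zero_sub]
    rw [hQv]
    have : (T₀.symm u : H) = Q x := by
      rw [hu, ContinuousLinearEquiv.symm_apply_apply]; exact hQcapp x
    rw [this, hw]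
    abel
  -- right inverse
  have hright : ∀ y : H, Tf (Ti y) = y := by
    intro y
    rw [hTiapp y, hTfapp]
    set z : He := T₀.symm (P y) with hz
    set v : H := (y - (P y : H)) - Q (y - (P y : H)) with hv
    have hQv : Q v = 0 := by rw [hv, map_sub, hQQ, sub_self]
    have hQzv : Q ((z : H) + v) = (z : H) := by
      rw [map_add, hQv, add_zero, hQfix _ z.2]
    have hQczv : Qc ((z : H) + v) = z := by
      apply Subtype.ext
      rw [hQcapp, hQzv]
    rw [hQczv]
    have hT₀z : ((T₀ z : He) : H) = (P y : H) := by rw [hz, ContinuousLinearEquiv.apply_symm_apply]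
    rw [hT₀z]
    have hsub : (z : H) + v - Q ((z : H) + v) = v := by rw [hQzv]; abel
    rw [hsub]
    have hPv : (P v : H) = -(Q (y - (P y : H)) : H) := by
      have h1 : P (y - (P y : H)) = 0 := by rw [map_sub, hPfix (P y), sub_self]
      have h2 : P (Q (y - (P y : H))) = ⟨Q (y - (P y : H)), hQmem _⟩ :=
        hPfix ⟨Q (y - (P y : H)), hQmem _⟩
      rw [hv, map_sub, h1, h2, zero_sub]
      rfl
    rw [hPv, hv]
    abel
  refine ⟨ContinuousLinearEquiv.equivOfInverse Tf Ti hleft hright, fun a => ?_⟩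
  -- the conjugated representation
  have hconj : ∀ (b : A) (y : H), Tf (π b (Ti y)) = ((σ b (P y) : He) : H) := by
    intro b y
    have h1 : π b (Ti y) = ((T₀.symm (σ b (P y)) : He) : H) := by
      rw [hTiapp y, map_add]
      have h2 : π b (y - (P y : H) - Q (y - (P y : H))) = 0 := by
        rw [map_sub, hπQ, sub_self]
      rw [h2, add_zero]
      exact (hσ b (P y)).symm
    rw [h1, hTfapp]
    set z : He := T₀.symm (σ b (P y)) with hz
    have hQz : Q (z : H) = (z : H) := hQfix _ z.2
    have hQcz : Qc ((z : H)) = z := Subtype.ext (by rw [hQcapp, hQz])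
    rw [hQcz, hz, ContinuousLinearEquiv.apply_symm_apply, hQz, sub_self, map_zero]
    simp
  -- inner product identities
  have hinner_right : ∀ (u : He) (y : H), (inner ℂ (u : H) y : ℂ) = inner ℂ (u : H) ((P y : He) : H) := by
    intro u y
    have h1 : (inner ℂ (u : H) (y - (P y : H)) : ℂ) = 0 :=
      Submodule.inner_right_of_mem_orthogonal u.2 (Submodule.sub_starProjection_mem_orthogonal (K := He) y)
    have := inner_sub_right (𝕜 := ℂ) (x := (u : H)) (y := y) (z := ((P y : He) : H))
    rw [h1] at this
    linear_combination -this
  have hinner_left : ∀ (x : H) (u : He), (inner ℂ x (u : H) : ℂ) = inner ℂ ((P x : He) : H) (u : H) := by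
    intro x u
    have := hinner_right u x
    calc (inner ℂ x (u : H) : ℂ) = starRingEnd ℂ (inner ℂ (u : H) x) := (inner_conj_symm _ _).symm
      _ = starRingEnd ℂ (inner ℂ (u : H) ((P x : He) : H)) := by rw [this]
      _ = inner ℂ ((P x : He) : H) (u : H) := inner_conj_symm _ _
  rw [ContinuousLinearMap.eq_adjoint_iff]
  intro x y
  show (inner ℂ (Tf ((π (star a)) (Ti x))) y : ℂ) = inner ℂ x (Tf ((π a) (Ti y)))
  rw [hconj, hconj]
  rw [hinner_right (σ (star a) (P x)) y, hσstar a (P x) (P y), ← hinner_left x]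
end
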